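/- Duality-gap inequality for the pseudo-gradient of Γ: for every pair (x, σ) with all components of σ nonnegative, and for every pair (x⋄, σ⋄), one has Σ_{i∈S} ⟨∇_{x_i}Γ(x, σ), x⋄_i − x_i⟩ − ⟨∇_σΓ(x, σ), σ⋄ − σ⟩ ≤ Γ(x⋄, σ) − Γ(x, σ⋄). -/

import Mathlib

open scoped BigOperators RealInnerProductSpace

/-- Duality-gap inequality for the pseudo-gradient of the
complementary function `Γ`. -/
theorem stmt_11
    (n : ℕ) (hn : 1 ≤ n)
    (S A : Type) [Fintype S] [DecidableEq S] [Fintype A] [DecidableEq A]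
    (a : A → EuclideanSpace ℝ (Fin n))
    (Ess : Finset (S × S))
    (hsym : ∀ i j : S, (i, j) ∈ Ess → (j, i) ∈ Ess)
    (hirr : ∀ i : S, (i, i) ∉ Ess)
    (U : Finset (S × S)) (hUsub : U ⊆ Ess)
    (hUone : ∀ i j : S, (i, j) ∈ Ess → ((i, j) ∈ U ↔ (j, i) ∉ U))
    (Eas : Finset (S × A))
    (d : S → S → ℝ) (hd : ∀ i j, d i j = d j i)
    (e : S → A → ℝ)
    (Γ : (S → EuclideanSpace ℝ (Fin n)) → (S × S → ℝ) → (S × A → ℝ) → ℝ)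
    (hΓ : ∀ x σs σa, Γ x σs σa =
      (∑ p ∈ U, (σs p * (‖x p.1 - x p.2‖ ^ 2 - d p.1 p.2 ^ 2) - σs p ^ 2 / 4))
        + ∑ q ∈ Eas,
            (σa q * (‖x q.1 - a q.2‖ ^ 2 - e q.1 q.2 ^ 2) - σa q ^ 2 / 4)) :
    ∀ (x : S → EuclideanSpace ℝ (Fin n)) (σs : S × S → ℝ) (σa : S × A → ℝ),
      (∀ p ∈ U, 0 ≤ σs p) → (∀ q ∈ Eas, 0 ≤ σa q) →
      ∀ (xd : S → EuclideanSpace ℝ (Fin n)) (σsd : S × S → ℝ) (σad : S × A → ℝ),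
      (∑ i : S,
        ⟪(∑ j ∈ Finset.univ.filter (fun j => (i, j) ∈ Ess),
            (2 * (if (i, j) ∈ U then σs (i, j) else σs (j, i))) • (x i - x j))
          + ∑ l ∈ Finset.univ.filter (fun l => (i, l) ∈ Eas),
              (2 * σa (i, l)) • (x i - a l),
          xd i - x i⟫)
        - ((∑ p ∈ U,
              ((‖x p.1 - x p.2‖ ^ 2 - d p.1 p.2 ^ 2) - σs p / 2) * (σsd p - σs p))
            + ∑ q ∈ Eas,
                ((‖x q.1 - a q.2‖ ^ 2 - e q.1 q.2 ^ 2) - σa q / 2) * (σad q - σa q))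
      ≤ Γ xd σs σa - Γ x σsd σad := by
  intro x σs σa hσs hσa xd σsd σad
  rw [hΓ, hΓ]
  classical
  -- abbreviations for the per-edge summands of the inner-product part
  set F : S × S → ℝ := fun p =>
    ⟪(2 * (if p ∈ U then σs p else σs (p.2, p.1))) • (x p.1 - x p.2), xd p.1 - x p.1⟫ with hF
  set G : S × A → ℝ := fun q =>
    ⟪(2 * σa q) • (x q.1 - a q.2), xd q.1 - x q.1⟫ with hG
  -- Step 1 : rewrite the big inner-product sum
  have hsplit : (∑ i : S,
        ⟪(∑ j ∈ Finset.univ.filter (fun j => (i, j) ∈ Ess),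
            (2 * (if (i, j) ∈ U then σs (i, j) else σs (j, i))) • (x i - x j))
          + ∑ l ∈ Finset.univ.filter (fun l => (i, l) ∈ Eas),
              (2 * σa (i, l)) • (x i - a l),
          xd i - x i⟫)
      = (∑ p ∈ Ess, F p) + ∑ q ∈ Eas, G q := by
    have h1 : ∀ i : S,
        ⟪(∑ j ∈ Finset.univ.filter (fun j => (i, j) ∈ Ess),
            (2 * (if (i, j) ∈ U then σs (i, j) else σs (j, i))) • (x i - x j))
          + ∑ l ∈ Finset.univ.filter (fun l => (i, l) ∈ Eas),
              (2 * σa (i, l)) • (x i - a l),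
          xd i - x i⟫
        = (∑ j ∈ Finset.univ.filter (fun j => (i, j) ∈ Ess), F (i, j))
          + ∑ l ∈ Finset.univ.filter (fun l => (i, l) ∈ Eas), G (i, l) := by
      intro i
      rw [inner_add_left, sum_inner, sum_inner]
    simp_rw [h1]
    rw [Finset.sum_add_distrib]
    congr 1
    · exact (Finset.sum_finset_product Ess Finset.univ
        (fun i => Finset.univ.filter (fun j => (i, j) ∈ Ess)) (by simp)).symm
    · exact (Finset.sum_finset_product Eas Finset.univ
        (fun i => Finset.univ.filter (fun l => (i, l) ∈ Eas)) (by simp)).symm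
  rw [hsplit]
  -- Step 2 : split the sum over Ess into U and its swap
  have hswapU : ∀ p ∈ U, (p.2, p.1) ∉ U := by
    intro p hp
    have := hUone p.1 p.2 (hUsub hp)
    exact this.mp (by simpa using hp)
  have hEss : Ess = U ∪ U.image Prod.swap := by
    ext p
    constructor
    · intro hp
      by_cases h : p ∈ U
      · exact Finset.mem_union_left _ h
      · refine Finset.mem_union_right _ ?_
        refine Finset.mem_image.mpr ⟨(p.2, p.1), ?_, rfl⟩
        have h2 := hUone p.1 p.2 (by simpa using hp)
        by_contra hc
        exact h (by simpa using (h2.mpr hc))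
    · intro hp
      rcases Finset.mem_union.mp hp with h | h
      · exact hUsub h
      · obtain ⟨q, hq, rfl⟩ := Finset.mem_image.mp h
        exact hsym q.1 q.2 (hUsub hq)
  have hdisj : Disjoint U (U.image Prod.swap) := by
    rw [Finset.disjoint_left]
    intro p hp hp'
    obtain ⟨q, hq, rfl⟩ := Finset.mem_image.mp hp'
    exact hswapU q hq hp
  have hsumEss : (∑ p ∈ Ess, F p)
      = ∑ p ∈ U, (F p + F (p.2, p.1)) := by
    rw [hEss, Finset.sum_union hdisj, Finset.sum_image
      (fun p _ q _ h => Prod.swap_injective h), Finset.sum_add_distrib]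
    simp [Prod.swap]
  rw [hsumEss]
  -- Step 3 : pointwise estimates
  have hU : (∑ p ∈ U, (F p + F (p.2, p.1)))
        - (∑ p ∈ U, ((‖x p.1 - x p.2‖ ^ 2 - d p.1 p.2 ^ 2) - σs p / 2) * (σsd p - σs p))
      ≤ (∑ p ∈ U, (σs p * (‖xd p.1 - xd p.2‖ ^ 2 - d p.1 p.2 ^ 2) - σs p ^ 2 / 4))
        - ∑ p ∈ U, (σsd p * (‖x p.1 - x p.2‖ ^ 2 - d p.1 p.2 ^ 2) - σsd p ^ 2 / 4) := by
    rw [← Finset.sum_sub_distrib, ← Finset.sum_sub_distrib]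
    refine Finset.sum_le_sum ?_
    intro p hp
    have hs := hσs p hp
    have hFp : F p = 2 * σs p * ⟪x p.1 - x p.2, xd p.1 - x p.1⟫ := by
      simp only [hF, if_pos hp, real_inner_smul_left]
    have hFq : F (p.2, p.1) = 2 * σs p * ⟪x p.2 - x p.1, xd p.2 - x p.2⟫ := by
      simp only [hF]
      rw [if_neg (hswapU p hp), real_inner_smul_left]
    rw [hFp, hFq]
    set v := x p.1 - x p.2 with hv
    set w := xd p.1 - xd p.2 with hw
    have hinner : ⟪x p.2 - x p.1, xd p.2 - x p.2⟫
        = - ⟪v, xd p.2 - x p.2⟫ := by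
      rw [hv, ← inner_neg_left]; congr 1; abel
    have hcomb : ⟪v, xd p.1 - x p.1⟫ - ⟪v, xd p.2 - x p.2⟫ = ⟪v, w⟫ - ‖v‖ ^ 2 := by
      rw [← inner_sub_right, ← @real_inner_self_eq_norm_sq, ← inner_sub_right]
      congr 1
      rw [hv, hw]; abel
    have hnn : 0 ≤ ‖w‖ ^ 2 - 2 * ⟪v, w⟫ + ‖v‖ ^ 2 := by
      have := sq_nonneg ‖w - v‖
      rwa [norm_sub_sq_real, real_inner_comm] at this
    rw [hinner]
    nlinarith [mul_nonneg hs hnn, sq_nonneg (σsd p - σs p), hcomb]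
  have hA : (∑ q ∈ Eas, G q)
        - (∑ q ∈ Eas, ((‖x q.1 - a q.2‖ ^ 2 - e q.1 q.2 ^ 2) - σa q / 2) * (σad q - σa q))
      ≤ (∑ q ∈ Eas, (σa q * (‖xd q.1 - a q.2‖ ^ 2 - e q.1 q.2 ^ 2) - σa q ^ 2 / 4))
        - ∑ q ∈ Eas, (σad q * (‖x q.1 - a q.2‖ ^ 2 - e q.1 q.2 ^ 2) - σad q ^ 2 / 4) := by
    rw [← Finset.sum_sub_distrib, ← Finset.sum_sub_distrib]
    refine Finset.sum_le_sum ?_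
    intro q hq
    have hs := hσa q hq
    have hGq : G q = 2 * σa q * ⟪x q.1 - a q.2, xd q.1 - x q.1⟫ := by
      simp only [hG, real_inner_smul_left]
    rw [hGq]
    set v := x q.1 - a q.2 with hv
    set w := xd q.1 - a q.2 with hw
    have hcomb : ⟪v, xd q.1 - x q.1⟫ = ⟪v, w⟫ - ‖v‖ ^ 2 := by
      rw [← @real_inner_self_eq_norm_sq, ← inner_sub_right]
      congr 1
      rw [hv, hw]; abel
    have hnn : 0 ≤ ‖w‖ ^ 2 - 2 * ⟪v, w⟫ + ‖v‖ ^ 2 := by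
      have := sq_nonneg ‖w - v‖
      rwa [norm_sub_sq_real, real_inner_comm] at this
    rw [hcomb]
    nlinarith [mul_nonneg hs hnn, sq_nonneg (σad q - σa q)]
  linarith
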